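/- Let d ≥ 1 be an integer, k ∈ {0,…,d−1}, z ≥ 1 a real number, and ε ∈ (0, 1/(2^{z+1}+2)]. Let P be a finite nonempty set of points in ℝ^d, set ψ = (ε/z)^z and r = 1 + max_{q∈P} D_z(q, 0_d)/(ψ·ε²). Let p ∈ P and let S be a nonempty affine k-subspace of ℝ^d such that D_z(0_d, S) ≥ ε·r. Then |D_z(0_d, S) − D_z(p, S)| ≤ 2ε·D_z(0_d, S). -/

import Mathlib

set_option maxHeartbeats 1600000 in
/-- Let `z ≥ 1`, `ε ∈ (0, 1/(2^{z+1}+2)]`, `P` a finite nonempty set of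
points in `ℝ^d`, `ψ = (ε/z)^z`, `r = 1 + max_{q∈P} dist(q,0)^z/(ψε²)`. If `p ∈ P` and `S`
is a nonempty affine `k`-subspace of `ℝ^d` with `D_z(0,S) ≥ εr`, then
`|D_z(0,S) − D_z(p,S)| ≤ 2ε·D_z(0,S)`, where `D_z(x,S) = dist(x,S)^z`. -/
theorem stmt3 (d k : ℕ) (hd : 1 ≤ d) (hk : k ≤ d - 1)
    (z ε : ℝ) (hz : 1 ≤ z) (hε : ε ∈ Set.Ioc (0 : ℝ) (1 / (2 ^ (z + 1) + 2)))
    (P : Finset (EuclideanSpace ℝ (Fin d))) (hP : P.Nonempty)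
    (p : EuclideanSpace ℝ (Fin d)) (hp : p ∈ P)
    (ψ r : ℝ) (hψ : ψ = (ε / z) ^ z)
    (hr : r = 1 + P.sup' hP fun q => dist q 0 ^ z / (ψ * ε ^ 2))
    (S : AffineSubspace ℝ (EuclideanSpace ℝ (Fin d)))
    (hS : (S : Set (EuclideanSpace ℝ (Fin d))).Nonempty)
    (hdim : Module.finrank ℝ S.direction = k)
    (hfar : ε * r ≤ Metric.infDist 0 (S : Set (EuclideanSpace ℝ (Fin d))) ^ z) :
    |Metric.infDist 0 (S : Set (EuclideanSpace ℝ (Fin d))) ^ z -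
        Metric.infDist p (S : Set (EuclideanSpace ℝ (Fin d))) ^ z| ≤
      2 * ε * Metric.infDist 0 (S : Set (EuclideanSpace ℝ (Fin d))) ^ z := by
  obtain ⟨hε0, hεle⟩ := hε
  set a := Metric.infDist 0 (S : Set (EuclideanSpace ℝ (Fin d))) with ha
  set b := Metric.infDist p (S : Set (EuclideanSpace ℝ (Fin d))) with hb
  have hz0 : (0 : ℝ) < z := lt_of_lt_of_le one_pos hz
  have ha0 : 0 ≤ a := Metric.infDist_nonneg
  have hb0 : 0 ≤ b := Metric.infDist_nonneg
  -- ε ≤ 1/6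
  have h2 : (2 : ℝ) ^ (2 : ℝ) ≤ (2 : ℝ) ^ (z + 1) :=
    Real.rpow_le_rpow_left_iff (by norm_num) |>.mpr (by linarith)
  have h2' : (2 : ℝ) ^ (2 : ℝ) = 4 := by
    rw [show (2 : ℝ) = ((2 : ℕ) : ℝ) by norm_num, Real.rpow_natCast]; norm_num
  have hε6 : ε ≤ 1 / 6 := by
    refine hεle.trans ?_
    rw [div_le_div_iff₀ (by linarith) (by norm_num)]
    linarith
  have hψ0 : 0 < ψ := by
    rw [hψ]; exact Real.rpow_pos_of_pos (div_pos hε0 hz0) z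
  -- r ≥ 1
  have hsup0 : 0 ≤ P.sup' hP fun q => dist q 0 ^ z / (ψ * ε ^ 2) := by
    refine le_trans ?_ (Finset.le_sup' _ hp)
    positivity
  have hr1 : (1 : ℝ) ≤ r := by rw [hr]; linarith
  have haz0 : 0 < a ^ z := lt_of_lt_of_le (by nlinarith) hfar
  have ha0' : 0 < a := by
    rcases lt_or_eq_of_le ha0 with h | h
    · exact h
    · exfalso; rw [← h, Real.zero_rpow (ne_of_gt hz0)] at haz0; linarith
  -- bound on dist p 0
  have hpb : dist p 0 ^ z / (ψ * ε ^ 2) ≤ r - 1 := by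
    rw [hr]; have := Finset.le_sup' (fun q => dist q 0 ^ z / (ψ * ε ^ 2)) hp; linarith
  have hpb2 : dist p 0 ^ z ≤ ψ * ε ^ 2 * r := by
    have h1 : dist p 0 ^ z ≤ (r - 1) * (ψ * ε ^ 2) := by
      rw [← div_le_iff₀ (by positivity)] at *; linarith [hpb]
    nlinarith [mul_pos hψ0 (by positivity : (0:ℝ) < ε ^ 2)]
  have hkey : dist p 0 ^ z ≤ ((ε / z) * a) ^ z := by
    have h1 : ψ * ε ^ 2 * r ≤ ψ * ε * (a ^ z) := by
      have : ε * (ε * r) ≤ ε * a ^ z := by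
        exact mul_le_mul_of_nonneg_left hfar (le_of_lt hε0)
      nlinarith [hψ0]
    have h2 : ((ε / z) * a) ^ z = ψ * a ^ z := by
      rw [Real.mul_rpow (by positivity) ha0, hψ]
    rw [h2]
    refine hpb2.trans (h1.trans ?_)
    have hε1 : ε ≤ 1 := by linarith
    have : ψ * ε * a ^ z ≤ ψ * 1 * a ^ z :=
      mul_le_mul_of_nonneg_right (mul_le_mul_of_nonneg_left hε1 hψ0.le) haz0.le
    linarith
  have hdp : dist p 0 ≤ (ε / z) * a :=
    (Real.rpow_le_rpow_iff dist_nonneg (by positivity) hz0).mp hkey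
  -- Lipschitz bounds
  have hab1 : a ≤ b + dist p 0 := by
    have := Metric.infDist_le_infDist_add_dist (x := (0 : EuclideanSpace ℝ (Fin d)))
      (y := p) (s := (S : Set (EuclideanSpace ℝ (Fin d))))
    rw [dist_comm] at this; exact this
  have hab2 : b ≤ a + dist p 0 :=
    Metric.infDist_le_infDist_add_dist
  -- lower bound : b^z ≥ (1-ε) a^z
  have hεz : ε / z ≤ ε := div_le_self hε0.le hz
  have hεz1 : 0 ≤ 1 - ε / z := by linarith
  have hlow : (1 - ε) * a ^ z ≤ b ^ z := by
    have hba : (1 - ε / z) * a ≤ b := by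
      have heq : (1 - ε / z) * a = a - ε / z * a := by ring
      rw [heq]; linarith [hdp, hab1]
    have h1 : ((1 - ε / z) * a) ^ z ≤ b ^ z :=
      Real.rpow_le_rpow (mul_nonneg hεz1 ha0) hba hz0.le
    have h2 : ((1 - ε / z) * a) ^ z = (1 - ε / z) ^ z * a ^ z :=
      Real.mul_rpow hεz1 ha0
    have h3 : 1 - ε ≤ (1 - ε / z) ^ z := by
      have := one_add_mul_self_le_rpow_one_add (s := -(ε / z)) (by linarith) hz
      have he : z * -(ε / z) = -ε := by field_simp
      rw [he] at this
      simpa [sub_eq_add_neg] using this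
    calc (1 - ε) * a ^ z ≤ (1 - ε / z) ^ z * a ^ z :=
          mul_le_mul_of_nonneg_right h3 haz0.le
      _ = ((1 - ε / z) * a) ^ z := h2.symm
      _ ≤ b ^ z := h1
  -- upper bound : b^z ≤ (1+2ε) a^z
  have hup : b ^ z ≤ (1 + 2 * ε) * a ^ z := by
    have hba : b ≤ (1 + ε / z) * a := by
      have heq : (1 + ε / z) * a = a + ε / z * a := by ring
      rw [heq]; linarith [hdp, hab2]
    have h1 : b ^ z ≤ ((1 + ε / z) * a) ^ z :=
      Real.rpow_le_rpow hb0 hba hz0.le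
    have h2 : ((1 + ε / z) * a) ^ z = (1 + ε / z) ^ z * a ^ z :=
      Real.mul_rpow (by positivity) ha0
    have h3 : (1 + ε / z) ^ z ≤ 1 + 2 * ε := by
      have he : (1 + ε / z) ^ z ≤ Real.exp ε := by
        have h4 : (1 + ε / z) ≤ Real.exp (ε / z) := by
          have := Real.add_one_le_exp (ε / z); linarith
        have h5 : (1 + ε / z) ^ z ≤ Real.exp (ε / z) ^ z :=
          Real.rpow_le_rpow (by positivity) h4 hz0.le
        rwa [← Real.exp_mul, div_mul_cancel₀ _ (ne_of_gt hz0)] at h5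
      have hexp : Real.exp ε ≤ 1 + 2 * ε := by
        have h6 : 1 - ε ≤ Real.exp (-ε) := by
          have := Real.add_one_le_exp (-ε); linarith
        have h7 : Real.exp ε * (1 - ε) ≤ 1 := by
          have := mul_le_mul_of_nonneg_left h6 (le_of_lt (Real.exp_pos ε))
          rwa [← Real.exp_add, add_neg_cancel, Real.exp_zero] at this
        nlinarith [Real.exp_pos ε]
      linarith
    calc b ^ z ≤ (1 + ε / z) ^ z * a ^ z := h2 ▸ h1
      _ ≤ (1 + 2 * ε) * a ^ z := mul_le_mul_of_nonneg_right h3 haz0.le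
  rw [abs_sub_le_iff]
  constructor <;> nlinarith [hlow, hup, haz0.le]
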